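/- (Theorem 4.4 of the paper) Let 𝑴 be a real symmetric positive definite M×M matrix with unique symmetric positive definite square root 𝑴^{1/2} and 𝑴^{−1/2} = (𝑴^{1/2})^{−1}, let 𝒜 be a real symmetric positive definite M×M matrix, and let U₀, F ∈ ℝ^M. Then there exists a constant C > 0, depending only on 𝑴, 𝒜, U₀ and F (in particular independent of n and τ), such that the following holds for every integer n ≥ 1 and every τ ∈ (0,1) with max{τ‖𝒜‖₂, ‖I − τ𝒜‖₂} < 1 and nτ ≤ 1: let (U_k) be defined by U_0 = U₀ and U_k = 𝑴^{−1/2}(I + τ𝒜)^{−1}𝑴^{1/2}U_{k−1} + τ𝑴^{−1/2}(I + τ𝒜)^{−1}𝑴^{−1/2}F, let U be the M×(n+1) matrix with columns U_0, …, U_n, let X = UᵀU with eigenvalues λ_0(X) ≥ λ_1(X) ≥ ⋯ ≥ λ_n(X) in decreasing order, and let X̄* = Ū*ᵀŪ* where Ū* has columns Ū*_k = (1 − τ‖𝒜‖₂)^k U₀, with largest eigenvalue λ_0(X̄*). Then (λ_0(X) − λ_0(X̄*))² + Σ_{k=1}^{n} λ_k(X)² ≤ C n⁴ τ². -/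

import Mathlib

open Matrix Finset

/-- The spectral norm (operator 2-norm) of a real square matrix. -/
noncomputable def spec {M : ℕ} (A : Matrix (Fin M) (Fin M) ℝ) : ℝ :=
  ‖LinearMap.toContinuousLinearMap (Matrix.toEuclideanLin A)‖

/-- The squared Frobenius norm of a real matrix. -/
noncomputable def frobSq {m l : ℕ} (A : Matrix (Fin m) (Fin l) ℝ) : ℝ :=
  ∑ i, ∑ j, (A i j) ^ 2

/-- The squared Euclidean norm of a real vector. -/
noncomputable def vecNormSq {M : ℕ} (x : Fin M → ℝ) : ℝ := ∑ i, (x i) ^ 2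

/-- The Euclidean norm of a real vector. -/
noncomputable def vecNorm {M : ℕ} (x : Fin M → ℝ) : ℝ := Real.sqrt (∑ i, (x i) ^ 2)

/-- The M×(n+1) matrix whose columns are the vectors `v 0, …, v n`. -/
noncomputable def colMat {M n : ℕ} (v : Fin (n + 1) → Fin M → ℝ) :
    Matrix (Fin M) (Fin (n + 1)) ℝ :=
  Matrix.of fun i k => v k i

/- ### Auxiliary lemmas -/

lemma vecNorm_eq {M : ℕ} (x : Fin M → ℝ) : vecNorm x = ‖(WithLp.equiv 2 (Fin M → ℝ)).symm x‖ := by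
  simp [vecNorm, EuclideanSpace.norm_eq, Real.norm_eq_abs, sq_abs]

lemma vecNorm_nonneg {M : ℕ} (x : Fin M → ℝ) : 0 ≤ vecNorm x := Real.sqrt_nonneg _

lemma vecNorm_add_le {M : ℕ} (x y : Fin M → ℝ) : vecNorm (x + y) ≤ vecNorm x + vecNorm y := by
  rw [vecNorm_eq, vecNorm_eq, vecNorm_eq]
  exact norm_add_le ((WithLp.equiv 2 (Fin M → ℝ)).symm x) ((WithLp.equiv 2 (Fin M → ℝ)).symm y)

lemma vecNorm_smul {M : ℕ} (c : ℝ) (x : Fin M → ℝ) : vecNorm (c • x) = |c| * vecNorm x := by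
  rw [vecNorm_eq, vecNorm_eq]
  exact norm_smul c ((WithLp.equiv 2 (Fin M → ℝ)).symm x)

lemma vecNorm_zero {M : ℕ} : vecNorm (0 : Fin M → ℝ) = 0 := by simp [vecNorm]

lemma vecNorm_neg {M : ℕ} (x : Fin M → ℝ) : vecNorm (-x) = vecNorm x := by
  have : (-x) = (-1 : ℝ) • x := by funext i; simp
  rw [this, vecNorm_smul]; simp

lemma vecNorm_sub_le {M : ℕ} (x y : Fin M → ℝ) : vecNorm (x - y) ≤ vecNorm x + vecNorm y := by
  have : x - y = x + (-y) := by funext i; simp [sub_eq_add_neg]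
  rw [this]
  exact (vecNorm_add_le x (-y)).trans (by rw [vecNorm_neg])

lemma vecNorm_sum_le {M : ℕ} {ι : Type*} (s : Finset ι) (f : ι → Fin M → ℝ) :
    vecNorm (∑ k ∈ s, f k) ≤ ∑ k ∈ s, vecNorm (f k) := by
  classical
  induction s using Finset.induction_on with
  | empty => simp [vecNorm_zero]
  | insert _ _ h ih =>
    rw [Finset.sum_insert h, Finset.sum_insert h]
    exact (vecNorm_add_le _ _).trans (by linarith)

lemma vecNorm_mulVec_le {M : ℕ} (A : Matrix (Fin M) (Fin M) ℝ) (x : Fin M → ℝ) :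
    vecNorm (A.mulVec x) ≤ spec A * vecNorm x := by
  rw [vecNorm_eq, vecNorm_eq]
  have hx : (LinearMap.toContinuousLinearMap (Matrix.toEuclideanLin A))
      ((WithLp.equiv 2 (Fin M → ℝ)).symm x) = (WithLp.equiv 2 (Fin M → ℝ)).symm (A.mulVec x) := by
    simp [Matrix.toEuclideanLin_apply]
  rw [← hx, spec]
  exact (LinearMap.toContinuousLinearMap (Matrix.toEuclideanLin A)).le_opNorm _

lemma sq_vecNorm {M : ℕ} (x : Fin M → ℝ) : vecNorm x ^ 2 = ∑ i, (x i) ^ 2 := by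
  rw [vecNorm]; exact Real.sq_sqrt (Finset.sum_nonneg fun i _ => sq_nonneg _)

lemma spec_nonneg {M : ℕ} (A : Matrix (Fin M) (Fin M) ℝ) : 0 ≤ spec A := norm_nonneg _

lemma dotProduct_le {M : ℕ} (x y : Fin M → ℝ) : x ⬝ᵥ y ≤ vecNorm x * vecNorm y := by
  have h := Finset.sum_mul_sq_le_sq_mul_sq Finset.univ x y
  refine (le_abs_self _).trans ?_
  rw [← Real.sqrt_sq_eq_abs, vecNorm, vecNorm,
    ← Real.sqrt_mul (Finset.sum_nonneg fun i _ => sq_nonneg _)]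
  exact Real.sqrt_le_sqrt (by simpa [dotProduct] using h)

lemma trace_eq_sum_eig {m : ℕ} (A : Matrix (Fin m) (Fin m) ℝ) (hA : A.IsHermitian) :
    A.trace = ∑ i, hA.eigenvalues i := by
  conv_lhs => rw [hA.spectral_theorem]
  rw [Unitary.conjStarAlgAut_apply, Matrix.trace_mul_cycle]
  have h1 : (star (hA.eigenvectorUnitary : Matrix (Fin m) (Fin m) ℝ)) *
      (hA.eigenvectorUnitary : Matrix (Fin m) (Fin m) ℝ) = 1 := Unitary.coe_star_mul_self _
  rw [h1, Matrix.one_mul, Matrix.trace_diagonal]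
  simp

lemma rayleigh_le {m : ℕ} (X : Matrix (Fin m) (Fin m) ℝ) (hX : X.IsHermitian) (t : ℝ)
    (ht : ∀ i, hX.eigenvalues i ≤ t) (x : Fin m → ℝ) :
    x ⬝ᵥ X.mulVec x ≤ t * (∑ i, (x i)^2) := by
  set Uu : Matrix (Fin m) (Fin m) ℝ := (hX.eigenvectorUnitary : Matrix (Fin m) (Fin m) ℝ) with hUu
  have hstar : star Uu = Uuᵀ := by simp [Matrix.star_eq_conjTranspose]
  have hUUt : Uu * Uuᵀ = 1 := by rw [← hstar]; exact Unitary.coe_mul_star_self _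
  set y : Fin m → ℝ := Uuᵀ.mulVec x with hy
  have hxU : ∀ z : Fin m → ℝ, x ⬝ᵥ Uu.mulVec z = y ⬝ᵥ z := by
    intro z
    rw [Matrix.dotProduct_mulVec x Uu, ← Matrix.mulVec_transpose]
  have key : x ⬝ᵥ X.mulVec x = ∑ i, hX.eigenvalues i * (y i)^2 := by
    conv_lhs => rw [hX.spectral_theorem]
    rw [Unitary.conjStarAlgAut_apply, ← hUu, hstar, ← Matrix.mulVec_mulVec, ← Matrix.mulVec_mulVec, hxU]
    simp only [← hy, dotProduct, Matrix.mulVec_diagonal]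
    exact Finset.sum_congr rfl fun i _ => by ring_nf; simp [mul_comm]
  have ysq : ∑ i, (y i)^2 = ∑ i, (x i)^2 := by
    have : ∑ i, (y i)^2 = y ⬝ᵥ y := by simp [dotProduct, sq]
    rw [this, hy, dotProduct_comm, Matrix.dotProduct_mulVec, ← Matrix.mulVec_transpose,
      Matrix.mulVec_mulVec, Matrix.transpose_transpose, hUUt, Matrix.one_mulVec]
    simp [dotProduct, sq]
  calc x ⬝ᵥ X.mulVec x = ∑ i, hX.eigenvalues i * (y i)^2 := key
    _ ≤ ∑ i, t * (y i)^2 := Finset.sum_le_sum fun i _ =>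
        mul_le_mul_of_nonneg_right (ht i) (sq_nonneg _)
    _ = t * ∑ i, (y i)^2 := by rw [Finset.mul_sum]
    _ = t * ∑ i, (x i)^2 := by rw [ysq]

lemma smul_posSemidef {M : ℕ} {A : Matrix (Fin M) (Fin M) ℝ} (hA : A.PosDef) {τ : ℝ} (hτ : 0 ≤ τ) :
    (τ • A).PosSemidef := by
  refine Matrix.PosSemidef.of_dotProduct_mulVec_nonneg ?_ fun x => ?_
  · unfold Matrix.IsHermitian
    rw [Matrix.conjTranspose_smul, hA.1]
    simp
  · rw [Matrix.smul_mulVec, dotProduct_smul]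
    exact smul_nonneg hτ (hA.posSemidef.dotProduct_mulVec_nonneg x)

lemma B_posDef {M : ℕ} {A : Matrix (Fin M) (Fin M) ℝ} (hA : A.PosDef) {τ : ℝ} (hτ : 0 < τ) :
    (1 + τ • A).PosDef :=
  Matrix.PosDef.add_posSemidef Matrix.PosDef.one (smul_posSemidef hA hτ.le)

lemma inv_contraction {M : ℕ} {A : Matrix (Fin M) (Fin M) ℝ} (hA : A.PosDef) {τ : ℝ} (hτ : 0 < τ)
    (z : Fin M → ℝ) : vecNorm ((1 + τ • A)⁻¹.mulVec z) ≤ vecNorm z := by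
  set B : Matrix (Fin M) (Fin M) ℝ := 1 + τ • A with hB
  have hBpd : B.PosDef := B_posDef hA hτ
  have hdet : IsUnit B.det := B.isUnit_iff_isUnit_det.mp hBpd.isUnit
  set y : Fin M → ℝ := B⁻¹.mulVec z with hy
  have hBy : B.mulVec y = z := by
    rw [hy, Matrix.mulVec_mulVec, Matrix.mul_nonsing_inv _ hdet, Matrix.one_mulVec]
  have h1 : vecNorm y ^ 2 ≤ y ⬝ᵥ z := by
    rw [← hBy, hB, Matrix.add_mulVec, Matrix.one_mulVec, dotProduct_add, sq_vecNorm]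
    have h2 : 0 ≤ y ⬝ᵥ (τ • A).mulVec y := by
      have := (smul_posSemidef hA hτ.le).dotProduct_mulVec_nonneg y
      simpa using this
    have h3 : y ⬝ᵥ y = ∑ i, (y i)^2 := by simp [dotProduct, sq]
    rw [h3] at *; linarith
  have h4 : y ⬝ᵥ z ≤ vecNorm y * vecNorm z := dotProduct_le y z
  rcases eq_or_lt_of_le (vecNorm_nonneg y) with h0 | h0
  · rw [← h0]; exact vecNorm_nonneg z
  · nlinarith [h1, h4]

lemma quad_eq {m l : ℕ} (A : Matrix (Fin m) (Fin l) ℝ) (c : Fin l → ℝ) :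
    c ⬝ᵥ (Aᵀ * A).mulVec c = ∑ i, (A.mulVec c i)^2 := by
  rw [← Matrix.mulVec_mulVec, Matrix.dotProduct_mulVec, Matrix.vecMul_transpose]
  simp [dotProduct, sq]

lemma trace_AtA {m l : ℕ} (A : Matrix (Fin m) (Fin l) ℝ) :
    (Aᵀ * A).trace = ∑ j, ∑ i, (A i j)^2 := by
  simp [Matrix.trace, Matrix.diag, Matrix.mul_apply, sq]

lemma colMat_trace {M n : ℕ} (v : Fin (n+1) → Fin M → ℝ) :
    ((colMat v)ᵀ * colMat v).trace = ∑ k : Fin (n+1), vecNorm (v k) ^ 2 := by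
  rw [trace_AtA]
  exact Finset.sum_congr rfl fun k _ => by rw [sq_vecNorm]; rfl

lemma colMat_mulVec {M n : ℕ} (v : Fin (n+1) → Fin M → ℝ) (c : Fin (n+1) → ℝ) :
    (colMat v).mulVec c = ∑ k : Fin (n+1), c k • v k := by
  funext i
  simp [colMat, Matrix.mulVec, dotProduct, mul_comm]

lemma colMat_hermitian_transpose {M n : ℕ} (v : Fin (n+1) → Fin M → ℝ) :
    ((colMat v)ᵀ * colMat v).PosSemidef := by
  have h := Matrix.posSemidef_conjTranspose_mul_self (colMat v)
  have : (colMat v)ᴴ = (colMat v)ᵀ := by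
    ext i j; simp [Matrix.conjTranspose_apply]
  rwa [this] at h

lemma gauss_bound (n : ℕ) (hn : 1 ≤ n) : (∑ k : Fin (n+1), ((k:ℕ):ℝ)) ≤ (n:ℝ)^2 := by
  have h := Finset.sum_range_id_mul_two (n+1)
  simp only [Nat.add_sub_cancel] at h
  have h2 : (∑ k : Fin (n+1), ((k:ℕ):ℝ)) * 2 = (n+1) * n := by
    rw [Fin.sum_univ_eq_sum_range (fun i => ((i:ℕ):ℝ)) (n+1)]
    have h3 := congrArg (Nat.cast : ℕ → ℝ) h
    push_cast at h3 ⊢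
    convert h3 using 2
  have hn' : (1:ℝ) ≤ n := by exact_mod_cast hn
  nlinarith

set_option maxHeartbeats 2000000 in
/-- **Theorem 4.4.** There is a constant `C > 0`, independent of `n` and `τ`, such
that for all `n ≥ 1` and `τ ∈ (0,1)` with `max{τ‖𝒜‖₂, ‖I - τ𝒜‖₂} < 1` and `nτ ≤ 1`:
with `X = UᵀU` for the backward Euler iterates `U_k` (eigenvalues `μ` in decreasing
order) and `X̄* = Ū*ᵀŪ*` for `Ū*_k = (1 - τ‖𝒜‖₂)^k U₀` (eigenvalues `ν` in decreasing
order), one has `(λ₀(X) - λ₀(X̄*))² + ∑_{k=1}^n λ_k(X)² ≤ C n⁴ τ²`. -/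
theorem theorem_4_4 {M : ℕ} (Mmat Msq A : Matrix (Fin M) (Fin M) ℝ)
    (hM : Mmat.PosDef) (hMsq : Msq.PosDef) (hsq : Msq * Msq = Mmat)
    (hA : A.PosDef) (U₀ F : Fin M → ℝ) :
    ∃ C > 0, ∀ n : ℕ, 1 ≤ n → ∀ τ : ℝ, 0 < τ → τ < 1 →
      τ * spec A < 1 → spec (1 - τ • A) < 1 → (n : ℝ) * τ ≤ 1 →
      ∀ U : ℕ → Fin M → ℝ, U 0 = U₀ →
        (∀ k : ℕ, 1 ≤ k → U k = (Msq⁻¹ * (1 + τ • A)⁻¹ * Msq).mulVec (U (k - 1)) +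
          τ • (Msq⁻¹ * (1 + τ • A)⁻¹ * Msq⁻¹).mulVec F) →
        ∀ (hX : ((colMat fun k : Fin (n + 1) => U (k : ℕ))ᵀ *
            (colMat fun k : Fin (n + 1) => U (k : ℕ))).IsHermitian)
          (hXbar : ((colMat fun k : Fin (n + 1) => (1 - τ * spec A) ^ (k : ℕ) • U₀)ᵀ *
            (colMat fun k : Fin (n + 1) => (1 - τ * spec A) ^ (k : ℕ) • U₀)).IsHermitian)
          (μ ν : Fin (n + 1) → ℝ)
          (σ σ' : Equiv.Perm (Fin (n + 1))),
          μ = hX.eigenvalues ∘ σ → Antitone μ →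
          ν = hXbar.eigenvalues ∘ σ' → Antitone ν →
          (μ 0 - ν 0) ^ 2 + ∑ k ∈ Finset.univ.erase (0 : Fin (n + 1)), μ k ^ 2 ≤
            C * (n : ℝ) ^ 4 * τ ^ 2 := by
  have ha : 0 ≤ spec A := spec_nonneg A
  have hb : 0 ≤ spec Msq⁻¹ := spec_nonneg _
  have hg : 0 ≤ vecNorm (Msq⁻¹.mulVec F) := vecNorm_nonneg _
  have hv₀ : 0 ≤ vecNorm (Msq.mulVec U₀) := vecNorm_nonneg _
  have hu : 0 ≤ vecNorm U₀ := vecNorm_nonneg _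
  set a := spec A with ha_def
  set b := spec Msq⁻¹ with hb_def
  set g := vecNorm (Msq⁻¹.mulVec F) with hg_def
  set v₀ := vecNorm (Msq.mulVec U₀) with hv₀_def
  set u := vecNorm U₀ with hu_def
  set c₃ : ℝ := 2*a*v₀ + g with hc₃_def
  set c₄ : ℝ := b*c₃ with hc₄_def
  set c₅ : ℝ := b*(v₀+g) with hc₅_def
  set c₆ : ℝ := c₄*(c₅+u) with hc₆_def
  set c₇ : ℝ := 2*u*c₄ with hc₇_def
  set c₈ : ℝ := c₆+c₇ with hc₈_def
  clear_value a b g v₀ u c₃ c₄ c₅ c₆ c₇ c₈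
  have hc₃ : 0 ≤ c₃ := by
    rw [hc₃_def]
    have := mul_nonneg (mul_nonneg (by norm_num : (0:ℝ) ≤ 2) ha) hv₀
    linarith only [this, hg]
  have hc₄ : 0 ≤ c₄ := by rw [hc₄_def]; exact mul_nonneg hb hc₃
  have hc₅ : 0 ≤ c₅ := by rw [hc₅_def]; exact mul_nonneg hb (by linarith)
  have hc₆ : 0 ≤ c₆ := by rw [hc₆_def]; exact mul_nonneg hc₄ (by linarith)
  have hc₇ : 0 ≤ c₇ := by
    rw [hc₇_def]
    have := mul_nonneg (mul_nonneg (by norm_num : (0:ℝ) ≤ 2) hu) hc₄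
    linarith only [this]
  have hc₈ : 0 ≤ c₈ := by rw [hc₈_def]; linarith only [hc₆, hc₇]
  refine ⟨2*c₈^2+1, by positivity, ?_⟩
  intro n hn τ hτ0 hτ1 hτA hτI hnτ U hU0 hUrec hX hXbar μ ν σ σ' hμ hμA hν hνA
  -- basic scalar facts
  set r : ℝ := 1 - τ * a with hr_def
  have haτ : 0 ≤ τ * a := mul_nonneg hτ0.le ha
  have hr0 : 0 < r := by rw [hr_def]; linarith only [hτA]
  have hr1 : r ≤ 1 := by rw [hr_def]; linarith only [haτ]
  have hrk1 : ∀ k : ℕ, r ^ k ≤ 1 := fun k => pow_le_one₀ hr0.le hr1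
  have hrk0 : ∀ k : ℕ, 0 ≤ r ^ k := fun k => pow_nonneg hr0.le k
  -- matrix inverses
  have hdetM : IsUnit Msq.det := Msq.isUnit_iff_isUnit_det.mp hMsq.isUnit
  have hMsq1 : Msq⁻¹ * Msq = 1 := Matrix.nonsing_inv_mul _ hdetM
  have hMsq2 : Msq * Msq⁻¹ = 1 := Matrix.mul_nonsing_inv _ hdetM
  set B : Matrix (Fin M) (Fin M) ℝ := 1 + τ • A with hB_def
  clear_value B
  have hBpd : B.PosDef := by rw [hB_def]; exact B_posDef hA hτ0
  have hdetB : IsUnit B.det := B.isUnit_iff_isUnit_det.mp hBpd.isUnit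
  have hBinv : B⁻¹ * B = 1 := Matrix.nonsing_inv_mul _ hdetB
  have hcontr : ∀ z, vecNorm (B⁻¹.mulVec z) ≤ vecNorm z := by
    rw [hB_def]; exact fun z => inv_contraction hA hτ0 z
  have hrecov : ∀ x : Fin M → ℝ, Msq⁻¹.mulVec (Msq.mulVec x) = x := by
    intro x; rw [Matrix.mulVec_mulVec, hMsq1, Matrix.one_mulVec]
  have hBrecov : ∀ z : Fin M → ℝ, B⁻¹.mulVec (B.mulVec z) = z := by
    intro z; rw [Matrix.mulVec_mulVec, hBinv, Matrix.one_mulVec]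
  set G : Fin M → ℝ := Msq⁻¹.mulVec F with hG_def
  clear_value G
  have hGnorm : vecNorm G = g := hg_def.symm
  -- recursion in transformed variables
  have hVrec : ∀ k : ℕ, Msq.mulVec (U (k+1)) = B⁻¹.mulVec (Msq.mulVec (U k)) + τ • B⁻¹.mulVec G := by
    intro k
    have h := hUrec (k+1) (by omega)
    simp only [Nat.add_sub_cancel] at h
    have h1 : Msq * (Msq⁻¹ * B⁻¹ * Msq) = B⁻¹ * Msq := by
      rw [← Matrix.mul_assoc, ← Matrix.mul_assoc, hMsq2, Matrix.one_mul]
    have h2 : Msq * (Msq⁻¹ * B⁻¹ * Msq⁻¹) = B⁻¹ * Msq⁻¹ := by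
      rw [← Matrix.mul_assoc, ← Matrix.mul_assoc, hMsq2, Matrix.one_mul]
    rw [h, Matrix.mulVec_add, Matrix.mulVec_smul, Matrix.mulVec_mulVec, h1,
      Matrix.mulVec_mulVec, h2, ← Matrix.mulVec_mulVec, ← Matrix.mulVec_mulVec, hG_def]
  -- Claim A : boundedness of the transformed iterates
  have hVbound : ∀ k : ℕ, vecNorm (Msq.mulVec (U k)) ≤ v₀ + k * (τ * g) := by
    intro k
    induction k with
    | zero => rw [hU0, ← hv₀_def]; simp
    | succ k ih =>
      rw [hVrec k]
      have h1 := vecNorm_add_le (B⁻¹.mulVec (Msq.mulVec (U k))) (τ • B⁻¹.mulVec G)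
      have h2 := (hcontr (Msq.mulVec (U k))).trans ih
      have h3 : vecNorm (τ • B⁻¹.mulVec G) ≤ τ * g := by
        rw [vecNorm_smul, abs_of_pos hτ0]
        have h4 := (hcontr G).trans_eq hGnorm
        exact mul_le_mul_of_nonneg_left h4 hτ0.le
      push_cast
      linarith only [h1, h2, h3]
  -- Claim B : closeness to the pure power iterates, transformed variables
  have hkey : ∀ w : Fin M → ℝ, B⁻¹.mulVec w - r • w
      = B⁻¹.mulVec ((τ*a) • w - (τ*r) • A.mulVec w) := by
    intro w
    have hw : (τ*a) • w - (τ*r) • A.mulVec w = w - B.mulVec (r • w) := by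
      rw [hB_def, Matrix.add_mulVec, Matrix.one_mulVec, Matrix.mulVec_smul,
        Matrix.smul_mulVec, hr_def]
      funext i
      simp only [Pi.sub_apply, Pi.add_apply, Pi.smul_apply, smul_eq_mul]
      ring
    rw [hw, Matrix.mulVec_sub, hBrecov]
  have hDiff : ∀ k : ℕ, vecNorm (Msq.mulVec (U k) - r^k • Msq.mulVec U₀) ≤ k * (τ * c₃) := by
    intro k
    induction k with
    | zero => rw [hU0]; simp [vecNorm_zero]
    | succ k ih =>
      have hsplit : Msq.mulVec (U (k+1)) - r^(k+1) • Msq.mulVec U₀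
          = B⁻¹.mulVec (Msq.mulVec (U k) - r^k • Msq.mulVec U₀)
            + (B⁻¹.mulVec (r^k • Msq.mulVec U₀) - r • (r^k • Msq.mulVec U₀))
            + τ • B⁻¹.mulVec G := by
        rw [hVrec k, Matrix.mulVec_sub]
        funext i
        simp only [Pi.add_apply, Pi.sub_apply, Pi.smul_apply, smul_eq_mul, pow_succ]
        ring
      rw [hsplit]
      have t1 := (hcontr (Msq.mulVec (U k) - r^k • Msq.mulVec U₀)).trans ih
      have t2 : vecNorm (B⁻¹.mulVec (r^k • Msq.mulVec U₀) - r • (r^k • Msq.mulVec U₀))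
          ≤ τ * (2*a*v₀) := by
        rw [hkey (r^k • Msq.mulVec U₀)]
        refine (hcontr _).trans ?_
        refine (vecNorm_sub_le _ _).trans ?_
        have e1 : vecNorm ((τ*a) • (r^k • Msq.mulVec U₀)) = (τ*a) * (r^k * v₀) := by
          rw [vecNorm_smul, vecNorm_smul, abs_of_nonneg haτ, abs_of_nonneg (hrk0 k), hv₀_def]
        have e2 : vecNorm ((τ*r) • A.mulVec (r^k • Msq.mulVec U₀)) ≤ (τ*r) * (a * (r^k * v₀)) := by
          rw [vecNorm_smul, abs_of_nonneg (mul_nonneg hτ0.le hr0.le)]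
          have h6 := vecNorm_mulVec_le A (r^k • Msq.mulVec U₀)
          rw [vecNorm_smul, abs_of_nonneg (hrk0 k), ← hv₀_def, ← ha_def] at h6
          exact mul_le_mul_of_nonneg_left h6 (mul_nonneg hτ0.le hr0.le)
        rw [e1]
        have hk1 := hrk1 k
        have f0 : r^k * v₀ ≤ v₀ := by
          have := mul_le_mul_of_nonneg_right hk1 hv₀; linarith only [this]
        have f1 : (τ*a) * (r^k*v₀) ≤ τ*a*v₀ := by
          have := mul_le_mul_of_nonneg_left f0 haτ; linarith only [this]
        have f2 : (τ*r) * (a * (r^k*v₀)) ≤ τ*(a*v₀) := by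
          have g0 : a * (r^k*v₀) ≤ a*v₀ := by
            have := mul_le_mul_of_nonneg_left f0 ha; linarith only [this]
          have g1 : τ*r ≤ τ := by
            have := mul_le_mul_of_nonneg_left hr1 hτ0.le; linarith only [this]
          exact mul_le_mul g1 g0 (mul_nonneg ha (mul_nonneg (hrk0 k) hv₀)) hτ0.le
        linarith only [f1, e2.trans f2]
      have t3 : vecNorm (τ • B⁻¹.mulVec G) ≤ τ * g := by
        rw [vecNorm_smul, abs_of_pos hτ0]
        have h4 := (hcontr G).trans_eq hGnorm
        exact mul_le_mul_of_nonneg_left h4 hτ0.le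
      have tri := (vecNorm_add_le (B⁻¹.mulVec (Msq.mulVec (U k) - r^k • Msq.mulVec U₀)
            + (B⁻¹.mulVec (r^k • Msq.mulVec U₀) - r • (r^k • Msq.mulVec U₀)))
          (τ • B⁻¹.mulVec G))
      have tri2 := vecNorm_add_le (B⁻¹.mulVec (Msq.mulVec (U k) - r^k • Msq.mulVec U₀))
          (B⁻¹.mulVec (r^k • Msq.mulVec U₀) - r • (r^k • Msq.mulVec U₀))
      have hsum : τ*(2*a*v₀) + τ*g = τ*c₃ := by rw [hc₃_def]; ring
      push_cast
      linarith only [t1, t2, t3, tri, tri2, hsum]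
  -- back to original variables
  have hdiffU : ∀ k : ℕ, vecNorm (U k - r^k • U₀) ≤ c₄ * (k * τ) := by
    intro k
    have hid : U k - r^k • U₀ = Msq⁻¹.mulVec (Msq.mulVec (U k) - r^k • Msq.mulVec U₀) := by
      rw [Matrix.mulVec_sub, Matrix.mulVec_smul, hrecov, hrecov]
    rw [hid]
    refine (vecNorm_mulVec_le _ _).trans ?_
    rw [← hb_def]
    calc b * vecNorm (Msq.mulVec (U k) - r^k • Msq.mulVec U₀)
        ≤ b * ((k:ℝ) * (τ * c₃)) := mul_le_mul_of_nonneg_left (hDiff k) hb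
      _ = c₄ * ((k:ℝ) * τ) := by rw [hc₄_def]; ring
  have hUbound : ∀ k : ℕ, (k:ℝ)*τ ≤ 1 → vecNorm (U k) ≤ c₅ := by
    intro k hk
    have hid : U k = Msq⁻¹.mulVec (Msq.mulVec (U k)) := (hrecov _).symm
    rw [hid]
    refine (vecNorm_mulVec_le _ _).trans ?_
    rw [← hb_def, hc₅_def]
    have h1 := hVbound k
    have h2 : (k:ℝ) * (τ * g) ≤ g := by
      have := mul_le_mul_of_nonneg_right hk hg; linarith only [this]
    exact mul_le_mul_of_nonneg_left (by linarith only [h1, h2]) hb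
  -- column matrices
  set Uc : Matrix (Fin M) (Fin (n+1)) ℝ := colMat fun k : Fin (n + 1) => U (k : ℕ) with hUc_def
  set Ub : Matrix (Fin M) (Fin (n+1)) ℝ := colMat fun k : Fin (n + 1) => r ^ (k : ℕ) • U₀ with hUb_def
  set s : ℝ := ∑ k : Fin (n+1), (r^(k:ℕ))^2 with hs_def
  clear_value s
  have hs1 : 1 ≤ s := by
    rw [hs_def]
    have h := Finset.single_le_sum (f := fun k : Fin (n+1) => (r^(k:ℕ))^2)
      (fun k _ => sq_nonneg _) (Finset.mem_univ 0)
    simpa using h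
  set c : Fin (n+1) → ℝ := fun k => r^(k:ℕ) with hc_def
  clear_value c
  -- eigenvalue facts
  have hXpsd : (Ucᵀ * Uc).PosSemidef := by rw [hUc_def]; exact colMat_hermitian_transpose _
  have hXbpsd : (Ubᵀ * Ub).PosSemidef := by rw [hUb_def]; exact colMat_hermitian_transpose _
  have hμnonneg : ∀ k, 0 ≤ μ k := by
    intro k; rw [hμ]; exact hXpsd.eigenvalues_nonneg (σ k)
  have hνnonneg : ∀ k, 0 ≤ ν k := by
    intro k; rw [hν]; exact hXbpsd.eigenvalues_nonneg (σ' k)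
  have hμtop : ∀ i, hX.eigenvalues i ≤ μ 0 := by
    intro i
    have h1 : μ (σ.symm i) = hX.eigenvalues i := by rw [hμ]; simp
    rw [← h1]; exact hμA (Fin.zero_le _)
  have hνtop : ∀ i, hXbar.eigenvalues i ≤ ν 0 := by
    intro i
    have h1 : ν (σ'.symm i) = hXbar.eigenvalues i := by rw [hν]; simp
    rw [← h1]; exact hνA (Fin.zero_le _)
  have hsumμ : ∑ k, μ k = (Ucᵀ * Uc).trace := by
    rw [hμ, trace_eq_sum_eig _ hX]
    exact Equiv.sum_comp σ hX.eigenvalues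
  have hsumν : ∑ k, ν k = (Ubᵀ * Ub).trace := by
    rw [hν, trace_eq_sum_eig _ hXbar]
    exact Equiv.sum_comp σ' hXbar.eigenvalues
  -- traces
  have htrX : (Ucᵀ * Uc).trace = ∑ k : Fin (n+1), vecNorm (U (k:ℕ)) ^ 2 := by
    rw [hUc_def, colMat_trace]
  have htrXb : (Ubᵀ * Ub).trace = s * u^2 := by
    rw [hUb_def, colMat_trace, hs_def, Finset.sum_mul]
    refine Finset.sum_congr rfl fun k _ => ?_
    rw [vecNorm_smul, abs_of_nonneg (hrk0 _), ← hu_def]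
    ring
  -- quadratic form vectors
  set P : Fin M → ℝ := Uc.mulVec c with hP_def
  clear_value P
  have hQ : Ub.mulVec c = s • U₀ := by
    rw [hUb_def, colMat_mulVec]
    funext i
    rw [hs_def]
    simp only [Finset.sum_apply, Pi.smul_apply, smul_eq_mul, Finset.sum_mul]
    exact Finset.sum_congr rfl fun k _ => by simp only [hc_def]; ring
  have hcs : ∑ i, (c i)^2 = s := by simp only [hs_def, hc_def]
  have hray1 : vecNorm P ^ 2 ≤ μ 0 * s := by
    have h := rayleigh_le (Ucᵀ * Uc) hX (μ 0) hμtop c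
    have h2 : c ⬝ᵥ (Ucᵀ * Uc).mulVec c = ∑ i, (P i)^2 := by rw [hP_def]; exact quad_eq Uc c
    rw [h2, hcs] at h
    rw [sq_vecNorm]
    exact h
  have hray2 : (s*u)^2 ≤ ν 0 * s := by
    have h := rayleigh_le (Ubᵀ * Ub) hXbar (ν 0) hνtop c
    have h2 : c ⬝ᵥ (Ubᵀ * Ub).mulVec c = ∑ i, ((s • U₀) i)^2 := by
      have h3 := quad_eq Ub c; rw [hQ] at h3; exact h3
    rw [h2, hcs] at h
    have h4 : ∑ i, ((s • U₀) i)^2 = (s*u)^2 := by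
      rw [← sq_vecNorm, vecNorm_smul, abs_of_nonneg (by linarith : (0:ℝ) ≤ s), ← hu_def]
    rw [h4] at h
    exact h
  have hν0 : ν 0 = s * u^2 := by
    have hup : ν 0 ≤ s * u^2 := by
      have h1 : ν 0 ≤ ∑ k, ν k := Finset.single_le_sum (fun k _ => hνnonneg k) (Finset.mem_univ 0)
      rw [hsumν, htrXb] at h1; exact h1
    have hdown : s * u^2 ≤ ν 0 := by
      by_contra hcon
      push_neg at hcon
      have h3 : ν 0 * s < (s*u^2) * s := mul_lt_mul_of_pos_right hcon (by linarith only [hs1])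
      linarith only [hray2, h3]
    linarith only [hup, hdown]
  -- trace upper bound
  have hgauss := gauss_bound n hn
  have htrXle : (Ucᵀ * Uc).trace ≤ s * u^2 + c₆ * ((n:ℝ)^2 * τ) := by
    rw [htrX]
    have hper : ∀ k : Fin (n+1), vecNorm (U (k:ℕ)) ^ 2
        ≤ (r^(k:ℕ))^2 * u^2 + ((c₅+u)*c₄*τ) * ((k:ℕ):ℝ) := by
      intro k
      have h1 : vecNorm (U (k:ℕ)) ≤ vecNorm (r^(k:ℕ) • U₀) + vecNorm (U (k:ℕ) - r^(k:ℕ) • U₀) := by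
        have h0 := vecNorm_add_le (r^(k:ℕ) • U₀) (U (k:ℕ) - r^(k:ℕ) • U₀)
        have : r^(k:ℕ) • U₀ + (U (k:ℕ) - r^(k:ℕ) • U₀) = U (k:ℕ) := by
          funext i; simp
        rwa [this] at h0
      have h2 : vecNorm (r^(k:ℕ) • U₀) = r^(k:ℕ) * u := by
        rw [vecNorm_smul, abs_of_nonneg (hrk0 _), ← hu_def]
      have h3 := hdiffU (k:ℕ)
      have h4 : vecNorm (U (k:ℕ)) ≤ c₅ := by
        refine hUbound (k:ℕ) ?_
        have hkn : ((k:ℕ):ℝ) ≤ (n:ℝ) := by exact_mod_cast Fin.is_le k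
        have := mul_le_mul_of_nonneg_right hkn hτ0.le
        linarith only [this, hnτ]
      have h5 : r^(k:ℕ) * u ≤ u := by
        have := mul_le_mul_of_nonneg_right (hrk1 (k:ℕ)) hu; linarith only [this]
      have hd0 := vecNorm_nonneg (U (k:ℕ) - r^(k:ℕ) • U₀)
      have hx0 := vecNorm_nonneg (U (k:ℕ))
      have hρu : (0:ℝ) ≤ r^(k:ℕ) * u := mul_nonneg (hrk0 _) hu
      rw [h2] at h1
      have key1 : (vecNorm (U (k:ℕ)) + r^(k:ℕ)*u) * (vecNorm (U (k:ℕ)) - r^(k:ℕ)*u)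
          ≤ (vecNorm (U (k:ℕ)) + r^(k:ℕ)*u) * vecNorm (U (k:ℕ) - r^(k:ℕ) • U₀) :=
        mul_le_mul_of_nonneg_left (by linarith only [h1]) (by linarith only [hx0, hρu])
      have key2 : (vecNorm (U (k:ℕ)) + r^(k:ℕ)*u) * vecNorm (U (k:ℕ) - r^(k:ℕ) • U₀)
          ≤ (c₅+u) * (c₄*(((k:ℕ):ℝ)*τ)) :=
        mul_le_mul (by linarith only [h4, h5]) h3 hd0 (by linarith only [hc₅, hu])
      linarith only [key1, key2]
    refine (Finset.sum_le_sum fun k _ => hper k).trans ?_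
    rw [Finset.sum_add_distrib, ← Finset.mul_sum, hs_def, ← Finset.sum_mul]
    have h6 : ((c₅+u)*c₄*τ) * (∑ k : Fin (n+1), ((k:ℕ):ℝ)) ≤ ((c₅+u)*c₄*τ) * (n:ℝ)^2 := by
      refine mul_le_mul_of_nonneg_left hgauss ?_
      exact mul_nonneg (mul_nonneg (by linarith) hc₄) hτ0.le
    have h7 : ((c₅+u)*c₄*τ) * (n:ℝ)^2 = c₆ * ((n:ℝ)^2 * τ) := by rw [hc₆_def]; ring
    linarith only [h6, h7]
  have hμ0le : μ 0 ≤ s*u^2 + c₆*((n:ℝ)^2*τ) := by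
    have h1 : μ 0 ≤ ∑ k, μ k := Finset.single_le_sum (fun k _ => hμnonneg k) (Finset.mem_univ 0)
    rw [hsumμ] at h1
    linarith only [h1, htrXle]
  -- deviation of P from s • U₀
  have hDn : vecNorm (P - s • U₀) ≤ c₄ * τ * (n:ℝ)^2 := by
    have hPQ : P - s • U₀ = ∑ k : Fin (n+1), c k • (U (k:ℕ) - r^(k:ℕ) • U₀) := by
      rw [← hQ, hP_def, hUc_def, hUb_def, colMat_mulVec, colMat_mulVec, ← Finset.sum_sub_distrib]
      exact Finset.sum_congr rfl fun k _ => (smul_sub (c k) _ _).symm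
    rw [hPQ]
    refine (vecNorm_sum_le _ _).trans ?_
    have hstep : ∀ k : Fin (n+1), vecNorm (c k • (U (k:ℕ) - r^(k:ℕ) • U₀)) ≤ (c₄*τ) * ((k:ℕ):ℝ) := by
      intro k
      rw [vecNorm_smul, show c k = r^(k:ℕ) from by simp [hc_def], abs_of_nonneg (hrk0 _)]
      have h1 := hdiffU (k:ℕ)
      have hd0 := vecNorm_nonneg (U (k:ℕ) - r^(k:ℕ) • U₀)
      have q1 : r^(k:ℕ) * vecNorm (U (k:ℕ) - r^(k:ℕ) • U₀)
          ≤ vecNorm (U (k:ℕ) - r^(k:ℕ) • U₀) := by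
        have := mul_le_mul_of_nonneg_right (hrk1 (k:ℕ)) hd0; linarith
      have q2 : c₄ * (((k:ℕ):ℝ) * τ) = (c₄*τ) * ((k:ℕ):ℝ) := by ring
      linarith only [q1, q2, h1]
    refine (Finset.sum_le_sum fun k _ => hstep k).trans ?_
    rw [← Finset.mul_sum]
    have hc₄τ : 0 ≤ c₄ * τ := mul_nonneg hc₄ hτ0.le
    calc (c₄*τ) * (∑ k : Fin (n+1), ((k:ℕ):ℝ)) ≤ (c₄*τ) * (n:ℝ)^2 :=
          mul_le_mul_of_nonneg_left hgauss hc₄τ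
      _ = c₄ * τ * (n:ℝ)^2 := by ring
  have hμ0ge : s*u^2 - c₇*((n:ℝ)^2*τ) ≤ μ 0 := by
    set E : ℝ := c₄ * τ * (n:ℝ)^2 with hE_def
    clear_value E
    have hE0 : 0 ≤ E := by
      rw [hE_def]; exact mul_nonneg (mul_nonneg hc₄ hτ0.le) (sq_nonneg _)
    have hC : c₇ * ((n:ℝ)^2*τ) = 2*u*E := by rw [hc₇_def, hE_def]; ring
    have hPl : s*u - E ≤ vecNorm P := by
      have h1 := vecNorm_add_le P (s • U₀ - P)
      have h2 : P + (s • U₀ - P) = s • U₀ := by funext i; simp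
      rw [h2] at h1
      have h3 : vecNorm (s • U₀ - P) = vecNorm (P - s • U₀) := by
        rw [← vecNorm_neg (P - s • U₀)]
        congr 1
        funext i; simp [Pi.neg_apply]
      have h4 : vecNorm (s • U₀) = s * u := by
        rw [vecNorm_smul, abs_of_nonneg (by linarith : (0:ℝ) ≤ s), ← hu_def]
      rw [h3, h4] at h1
      linarith only [h1, hDn]
    rw [hC]
    rcases le_or_gt (s*u) E with hcase | hcase
    · have hle : s*u^2 ≤ E*u := by
        have := mul_le_mul_of_nonneg_right hcase hu; linarith only [this]
      linarith only [mul_nonneg hE0 hu, hμnonneg 0, hle]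
    · have h0 : (0:ℝ) ≤ s*u - E := by linarith only [hcase]
      have h1 : (s*u - E)^2 ≤ vecNorm P ^2 := pow_le_pow_left₀ h0 hPl 2
      have h2 : (s*u - E)^2 ≤ μ 0 * s := h1.trans hray1
      by_contra hcon
      push_neg at hcon
      have h3 : μ 0 * s < (s*u^2 - 2*u*E) * s := mul_lt_mul_of_pos_right hcon (by linarith only [hs1])
      linarith only [sq_nonneg E, h2, h3]
  -- final assembly
  have hSsum : (∑ k ∈ Finset.univ.erase (0 : Fin (n+1)), μ k) + μ 0 = ∑ k, μ k :=
    Finset.sum_erase_add _ _ (Finset.mem_univ 0)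
  have hS0 : 0 ≤ ∑ k ∈ Finset.univ.erase (0 : Fin (n+1)), μ k :=
    Finset.sum_nonneg fun k _ => hμnonneg k
  have hSle : ∑ k ∈ Finset.univ.erase (0 : Fin (n+1)), μ k ≤ c₈ * ((n:ℝ)^2*τ) := by
    have h1 : ∑ k, μ k ≤ s*u^2 + c₆*((n:ℝ)^2*τ) := by rw [hsumμ]; exact htrXle
    rw [hc₈_def]
    have h2 := hμ0ge
    have h3 : (c₆+c₇) * ((n:ℝ)^2*τ) = c₆*((n:ℝ)^2*τ) + c₇*((n:ℝ)^2*τ) := by ring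
    linarith only [h1, h2, h3, hSsum]
  have hsq_sum : ∑ k ∈ Finset.univ.erase (0 : Fin (n+1)), μ k ^ 2
      ≤ (∑ k ∈ Finset.univ.erase (0 : Fin (n+1)), μ k)^2 := by
    calc ∑ k ∈ Finset.univ.erase (0 : Fin (n+1)), μ k ^ 2
        ≤ ∑ k ∈ Finset.univ.erase (0 : Fin (n+1)),
            μ k * (∑ j ∈ Finset.univ.erase (0 : Fin (n+1)), μ j) := by
          refine Finset.sum_le_sum fun k hk => ?_
          rw [sq]
          exact mul_le_mul_of_nonneg_left
            (Finset.single_le_sum (fun j _ => hμnonneg j) hk) (hμnonneg k)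
      _ = (∑ k ∈ Finset.univ.erase (0 : Fin (n+1)), μ k)^2 := by
          rw [← Finset.sum_mul, sq]
  have hn2τ : 0 ≤ (n:ℝ)^2*τ := mul_nonneg (sq_nonneg _) hτ0.le
  have habs : (μ 0 - ν 0)^2 ≤ (c₈*((n:ℝ)^2*τ))^2 := by
    have hBnd : 0 ≤ c₈*((n:ℝ)^2*τ) := mul_nonneg hc₈ hn2τ
    have hl : -(c₈*((n:ℝ)^2*τ)) ≤ μ 0 - ν 0 := by
      rw [hν0, hc₈_def]
      have h3 : (c₆+c₇) * ((n:ℝ)^2*τ) = c₆*((n:ℝ)^2*τ) + c₇*((n:ℝ)^2*τ) := by ring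
      linarith only [h3, hμ0ge, mul_nonneg hc₆ hn2τ]
    have hr : μ 0 - ν 0 ≤ c₈*((n:ℝ)^2*τ) := by
      rw [hν0, hc₈_def]
      have h3 : (c₆+c₇) * ((n:ℝ)^2*τ) = c₆*((n:ℝ)^2*τ) + c₇*((n:ℝ)^2*τ) := by ring
      linarith only [h3, hμ0le, mul_nonneg hc₇ hn2τ]
    exact sq_le_sq' hl hr
  have hs2 : (∑ k ∈ Finset.univ.erase (0 : Fin (n+1)), μ k)^2 ≤ (c₈*((n:ℝ)^2*τ))^2 :=
    pow_le_pow_left₀ hS0 hSle 2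
  have hfinal : (μ 0 - ν 0)^2 + ∑ k ∈ Finset.univ.erase (0 : Fin (n+1)), μ k ^ 2
      ≤ 2*(c₈*((n:ℝ)^2*τ))^2 := by linarith only [habs, hsq_sum.trans hs2]
  refine hfinal.trans ?_
  have hid : 2*(c₈*((n:ℝ)^2*τ))^2 = 2*c₈^2 * ((n:ℝ)^4 * τ^2) := by ring
  have hid2 : (2*c₈^2+1) * (n:ℝ)^4 * τ^2 = 2*c₈^2 * ((n:ℝ)^4 * τ^2) + (n:ℝ)^4 * τ^2 := by ring
  have hpos : 0 ≤ (n:ℝ)^4 * τ^2 := mul_nonneg (by positivity) (sq_nonneg _)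
  linarith only [hid, hid2, hpos]
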